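/- Let λ ∈ ℕ with λ ≥ 6 and define F : (0,∞) → (0,∞) by F(t) = 2^t. Then for every natural number n ≥ 1 with log⊛(n) ≥ λ, setting j = ⌊log⊛(n)/λ⌋, it holds that F^[j](j·λ) ≤ n. -/

import Mathlib

noncomputable def lg (x : ℝ) : ℝ := Real.logb 2 (max 1 x)

noncomputable def logCirc (α : ℝ) : ℕ := sSup {k : ℕ | (k : ℝ) ≤ lg^[k] α}

lemma logb2_le_self {w : ℝ} (hw : 1 ≤ w) : Real.logb 2 w ≤ w := by
  have h0 : (0:ℝ) < w := lt_of_lt_of_le one_pos hw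
  rw [Real.logb_le_iff_le_rpow one_lt_two h0]
  -- w ≤ 2 ^ w
  have h1 : w < (⌊w⌋₊ : ℝ) + 1 := Nat.lt_floor_add_one w
  have h2 : (⌊w⌋₊ : ℝ) + 1 ≤ (2:ℝ) ^ (⌊w⌋₊ : ℕ) := by
    have := Nat.lt_two_pow_self (n := ⌊w⌋₊)
    exact_mod_cast this
  have h3 : ((2:ℝ) ^ (⌊w⌋₊ : ℕ)) = (2:ℝ) ^ ((⌊w⌋₊ : ℕ) : ℝ) := by
    rw [Real.rpow_natCast]
  have h4 : (2:ℝ) ^ ((⌊w⌋₊ : ℕ) : ℝ) ≤ (2:ℝ) ^ w :=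
    Real.rpow_le_rpow_of_exponent_le one_le_two (Nat.floor_le (le_of_lt h0))
  linarith
lemma lg_le_max (y : ℝ) : lg y ≤ max 1 y := by
  have := logb2_le_self (le_max_left 1 y)
  unfold lg
  calc Real.logb 2 (max 1 y) ≤ max 1 y := this
    _ ≤ max 1 y := le_rfl

lemma iter_lg_le_max (m : ℕ) (y : ℝ) : lg^[m] y ≤ max 1 y := by
  induction m with
  | zero => simp
  | succ m ih =>
    rw [Function.iterate_succ_apply']
    calc lg (lg^[m] y) ≤ max 1 (lg^[m] y) := lg_le_max _
      _ ≤ max 1 (max 1 y) := max_le_max le_rfl ih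
      _ = max 1 y := by rw [← max_assoc, max_self]

lemma keyA (j : ℕ) : ∀ a x : ℝ, 1 ≤ a → a ≤ lg^[j] x →
    (fun t : ℝ => (2:ℝ) ^ t)^[j] a ≤ x := by
  induction j with
  | zero => intro a x _ hax; simpa using hax
  | succ j ih =>
    intro a x ha hax
    rw [Function.iterate_succ_apply'] at hax
    set y := lg^[j] x with hy
    have hlgy : 1 ≤ lg y := le_trans ha hax
    have hmax2 : (2:ℝ) ≤ max 1 y := by
      have h0 : (0:ℝ) < max 1 y := lt_of_lt_of_le one_pos (le_max_left _ _)
      have := (Real.le_logb_iff_rpow_le one_lt_two h0).mp hlgy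
      simpa using this
    have hy2 : (2:ℝ) ≤ y := by
      rcases max_cases 1 y with ⟨he, _⟩ | ⟨he, _⟩
      · rw [he] at hmax2; linarith
      · rwa [he] at hmax2
    have h2a : (2:ℝ) ^ a ≤ y := by
      have h1 : (2:ℝ) ^ a ≤ (2:ℝ) ^ (lg y) :=
        Real.rpow_le_rpow_of_exponent_le one_le_two hax
      have h2 : (2:ℝ) ^ (lg y) = max 1 y := by
        unfold lg
        exact Real.rpow_logb two_pos (by norm_num)
          (lt_of_lt_of_le one_pos (le_max_left _ _))
      rw [h2] at h1
      calc (2:ℝ)^a ≤ max 1 y := h1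
        _ = y := max_eq_right (by linarith)
    have h1a : (1:ℝ) ≤ (2:ℝ) ^ a := by
      have := Real.rpow_le_rpow_of_exponent_le (one_le_two) (le_trans zero_le_one ha : (0:ℝ) ≤ a)
      calc (1:ℝ) = (2:ℝ)^(0:ℝ) := by rw [Real.rpow_zero]
        _ ≤ (2:ℝ)^a := Real.rpow_le_rpow_of_exponent_le one_le_two (by linarith)
    rw [Function.iterate_succ_apply]
    exact ih ((2:ℝ)^a) x h1a h2a

theorem stmt18 (lam : ℕ) (hlam : 6 ≤ lam) (n : ℕ) (hn : 1 ≤ n)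
    (h : lam ≤ logCirc (n : ℝ)) :
    (fun t : ℝ => (2 : ℝ) ^ t)^[logCirc (n : ℝ) / lam]
        (((logCirc (n : ℝ) / lam : ℕ) : ℝ) * (lam : ℝ)) ≤ (n : ℝ) := by
  set k := logCirc (n : ℝ) with hkdef
  have hn1 : (1:ℝ) ≤ (n:ℝ) := by exact_mod_cast hn
  have hbdd : BddAbove {m : ℕ | (m : ℝ) ≤ lg^[m] (n:ℝ)} := by
    refine ⟨n, fun m hm => ?_⟩
    have : (m : ℝ) ≤ max 1 (n:ℝ) := le_trans hm (iter_lg_le_max m _)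
    rw [max_eq_right hn1] at this
    exact_mod_cast this
  have h0mem : 0 ∈ {m : ℕ | (m : ℝ) ≤ lg^[m] (n:ℝ)} := by
    simp only [Set.mem_setOf_eq, Nat.cast_zero, Function.iterate_zero_apply]
    linarith
  have hk : (k : ℝ) ≤ lg^[k] (n:ℝ) :=
    Nat.sSup_mem ⟨0, h0mem⟩ hbdd
  set j := k / lam with hjdef
  have hlampos : 0 < lam := by omega
  have hj1 : 1 ≤ j := (Nat.one_le_div_iff hlampos).mpr h
  have hjk : j * lam ≤ k := Nat.div_mul_le_self k lam
  have hjlek : j ≤ k := le_trans (Nat.le_mul_of_pos_right j hlampos) hjk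
  have hk6 : 6 ≤ k := le_trans hlam h
  -- lg^[k] n ≤ max 1 (lg^[j] n)
  have hsplit : lg^[k] (n:ℝ) = lg^[k - j] (lg^[j] (n:ℝ)) := by
    rw [← Function.iterate_add_apply, Nat.sub_add_cancel hjlek]
  have hkj : (k:ℝ) ≤ lg^[j] (n:ℝ) := by
    have h1 : (k:ℝ) ≤ max 1 (lg^[j] (n:ℝ)) := by
      rw [hsplit] at hk
      exact le_trans hk (iter_lg_le_max _ _)
    have hk1 : (1:ℝ) < (k:ℝ) := by exact_mod_cast (by omega : 1 < k)
    rcases le_or_gt 1 (lg^[j] (n:ℝ)) with hc | hc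
    · rwa [max_eq_right hc] at h1
    · rw [max_eq_left (le_of_lt hc)] at h1; linarith
  have ha1 : (1:ℝ) ≤ (j:ℝ) * (lam:ℝ) := by
    have : (1:ℕ) ≤ j * lam := Nat.one_le_iff_ne_zero.mpr (by positivity)
    exact_mod_cast this
  have hax : (j:ℝ) * (lam:ℝ) ≤ lg^[j] (n:ℝ) := by
    have : ((j * lam : ℕ) : ℝ) ≤ (k:ℝ) := by exact_mod_cast hjk
    push_cast at this
    linarith
  exact keyA j _ _ ha1 hax
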